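/- Let H ∈ (1/2, 1) and α > 0. Define U^α_0 = H^{(1−α)H} ∫_0^{H} r^{(α−1)H} dB_r evaluated with a_0 = H, where B is a fractional Brownian motion with Hurst index H. Then E[(U^α_0)^2] = ((2H−1) H^{2H} / α) · B(1 − H + αH, 2H − 1), where B(·,·) is the Beta function. -/

import Mathlib

open MeasureTheory ProbabilityTheory Real Set
open scoped ENNReal

noncomputable def betaFn (a b : ℝ) : ℝ :=
  ∫ z in Set.Ioo (0:ℝ) 1, z ^ (a-1) * (1-z) ^ (b-1)

namespace FOUAux

lemma integrableOn_rpow_Ioc {p b : ℝ} (hp : -1 < p) :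
    IntegrableOn (fun t : ℝ => t ^ p) (Ioc 0 b) := by
  rcases le_or_gt b 0 with hb | hb
  · rw [Set.Ioc_eq_empty (not_lt.mpr hb)]; exact integrableOn_empty
  · exact (intervalIntegrable_iff_integrableOn_Ioc_of_le hb.le).mp
      (intervalIntegral.intervalIntegrable_rpow' hp)

lemma integrableOn_rpow_Ioo {p b : ℝ} (hp : -1 < p) :
    IntegrableOn (fun t : ℝ => t ^ p) (Ioo 0 b) :=
  (integrableOn_rpow_Ioc hp).mono_set Ioo_subset_Ioc_self

lemma integral_rpow_Ioo {p b : ℝ} (hp : -1 < p) (hb : 0 < b) :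
    ∫ t in Ioo (0:ℝ) b, t ^ p = b ^ (p+1) / (p+1) := by
  rw [← integral_Ioc_eq_integral_Ioo, ← intervalIntegral.integral_of_le hb.le,
    integral_rpow (Or.inl hp), Real.zero_rpow (by linarith : p + 1 ≠ 0)]
  ring

lemma integrableOn_rpow_sub {β y b : ℝ} (hβ : -1 < β) :
    IntegrableOn (fun x : ℝ => (x - y) ^ β) (Ioo y b) := by
  rcases le_or_gt b y with hb | hb
  · rw [Set.Ioo_eq_empty (not_lt.mpr hb)]; exact integrableOn_empty
  · have h1 := (intervalIntegral.intervalIntegrable_rpow' (a := 0) (b := b - y) hβ).comp_sub_right y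
    rw [zero_add, sub_add_cancel] at h1
    exact (intervalIntegrable_iff_integrableOn_Ioo_of_le hb.le).mp h1

lemma integrableOn_rpow_sub_left {β y a : ℝ} (hβ : -1 < β) (ha : a ≤ y) :
    IntegrableOn (fun x : ℝ => (y - x) ^ β) (Ioo a y) := by
  have h1 := (intervalIntegral.intervalIntegrable_rpow' (a := 0) (b := y - a) hβ).comp_sub_left y
  rw [sub_zero, sub_sub_cancel] at h1
  exact (intervalIntegrable_iff_integrableOn_Ioo_of_le ha).mp h1.symm

lemma integrableOn_beta_kernel {c β y : ℝ} (hc : -1 < c) (hβ1 : -1 < β) (hβ0 : β < 0)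
    (hy : 0 < y) :
    IntegrableOn (fun x : ℝ => x ^ c * (y - x) ^ β) (Ioo 0 y) := by
  have hmeas : Measurable fun x : ℝ => x ^ c * (y - x) ^ β :=
    (measurable_id.pow measurable_const).mul ((measurable_const.sub measurable_id).pow measurable_const)
  have hsub : Ioo (0:ℝ) y ⊆ Ioc 0 (y/2) ∪ Ioo (y/2) y := by
    intro x hx
    rcases le_or_gt x (y/2) with h | h
    · exact Or.inl ⟨hx.1, h⟩
    · exact Or.inr ⟨h, hx.2⟩
  refine IntegrableOn.mono_set (IntegrableOn.union ?_ ?_) hsub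
  · refine Integrable.mono ((integrableOn_rpow_Ioc hc).const_mul ((y/2) ^ β))
      hmeas.aestronglyMeasurable.restrict ?_
    refine (ae_restrict_iff' measurableSet_Ioc).mpr (Filter.Eventually.of_forall fun x hx => ?_)
    have hx0 : 0 < x := hx.1
    have hxy : x ≤ y / 2 := hx.2
    have h1 : (y - x) ^ β ≤ (y/2) ^ β :=
      Real.rpow_le_rpow_of_nonpos (by linarith) (by linarith) hβ0.le
    rw [Real.norm_of_nonneg (mul_nonneg (Real.rpow_nonneg hx0.le c)
        (Real.rpow_nonneg (by linarith : (0:ℝ) ≤ y - x) β)),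
      Real.norm_of_nonneg (mul_nonneg (Real.rpow_nonneg (by positivity) β)
        (Real.rpow_nonneg hx0.le c))]
    calc x ^ c * (y - x) ^ β ≤ x ^ c * (y/2) ^ β :=
          mul_le_mul_of_nonneg_left h1 (Real.rpow_nonneg hx0.le c)
      _ = (y/2) ^ β * x ^ c := mul_comm _ _
  · set M : ℝ := max ((y/2) ^ c) (y ^ c) with hM
    have hM0 : 0 ≤ M := le_trans (Real.rpow_nonneg (by positivity) c) (le_max_left _ _)
    refine Integrable.mono ((integrableOn_rpow_sub_left hβ1 (by linarith)).const_mul M)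
      hmeas.aestronglyMeasurable.restrict ?_
    refine (ae_restrict_iff' measurableSet_Ioo).mpr (Filter.Eventually.of_forall fun x hx => ?_)
    have hx0 : 0 < x := lt_trans (by positivity) hx.1
    have hxc : x ^ c ≤ M := by
      rcases le_or_gt 0 c with h | h
      · exact le_trans (Real.rpow_le_rpow hx0.le hx.2.le h) (le_max_right _ _)
      · exact le_trans (Real.rpow_le_rpow_of_nonpos (by positivity) hx.1.le h.le)
          (le_max_left _ _)
    rw [Real.norm_of_nonneg (mul_nonneg (Real.rpow_nonneg hx0.le c)
        (Real.rpow_nonneg (by linarith [hx.2] : (0:ℝ) ≤ y - x) β)),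
      Real.norm_of_nonneg (mul_nonneg hM0 (Real.rpow_nonneg (by linarith [hx.2] : (0:ℝ) ≤ y - x) β))]
    exact mul_le_mul_of_nonneg_right hxc
      (Real.rpow_nonneg (by linarith [hx.2] : (0:ℝ) ≤ y - x) β)

lemma beta_scaled {c β y : ℝ} (hc : -1 < c) (hβ1 : -1 < β) (hβ0 : β < 0) (hy : 0 < y) :
    ∫ x in Ioo 0 y, x ^ c * (y - x) ^ β = y ^ (c+β+1) * betaFn (c+1) (β+1) := by
  have hbf : betaFn (c+1) (β+1) = ∫ z in Ioo (0:ℝ) 1, z ^ c * (1-z) ^ β := by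
    unfold betaFn; norm_num
  have key := intervalIntegral.smul_integral_comp_mul_left
    (a := 0) (b := 1) (fun x => x ^ c * (y - x) ^ β) y
  rw [mul_zero, mul_one] at key
  have hIz : ∫ z in (0:ℝ)..1, (y * z) ^ c * (y - y * z) ^ β
      = y ^ c * y ^ β * ∫ z in Ioo (0:ℝ) 1, z ^ c * (1-z) ^ β := by
    rw [intervalIntegral.integral_of_le (by norm_num : (0:ℝ) ≤ 1),
      integral_Ioc_eq_integral_Ioo,
      ← MeasureTheory.integral_const_mul]
    refine setIntegral_congr_fun measurableSet_Ioo fun z hz => ?_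
    have hz0 : 0 < z := hz.1
    have hz1 : z < 1 := hz.2
    rw [Real.mul_rpow hy.le hz0.le,
        show y - y * z = y * (1 - z) by ring,
        Real.mul_rpow hy.le (by linarith : (0:ℝ) ≤ 1 - z)]
    ring
  rw [← integral_Ioc_eq_integral_Ioo, ← intervalIntegral.integral_of_le hy.le, ← key, hIz, hbf]
  rw [show c + β + 1 = c + (β + 1) by ring, Real.rpow_add hy, Real.rpow_add hy, Real.rpow_one, smul_eq_mul]
  ring



lemma double_integral_eval {Hc c β : ℝ} (hH : 0 < Hc) (hc : -1 < c) (hβ1 : -1 < β)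
    (hβ0 : β < 0) (hsum : -1 < 2*c + β + 1) :
    ∫ y in Ioo (0:ℝ) Hc, ∫ x in Ioo (0:ℝ) Hc, x ^ c * y ^ c * |x - y| ^ β
      = 2 * betaFn (c+1) (β+1) * Hc ^ (2*c+β+2) / (2*c+β+2) := by
  classical
  set Bf := betaFn (c+1) (β+1) with hBfdef
  set p := 2*c + β + 1 with hpdef
  have hp1 : -1 < p := hsum
  set g : ℝ → ℝ := fun y => ∫ x in Ioo y Hc, x ^ c * y ^ c * (x - y) ^ β with hgdef
  have hBf_nonneg : 0 ≤ Bf := by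
    rw [hBfdef]
    unfold betaFn
    refine setIntegral_nonneg measurableSet_Ioo fun z hz => ?_
    exact mul_nonneg (Real.rpow_nonneg hz.1.le _)
      (Real.rpow_nonneg (by linarith [hz.2] : (0:ℝ) ≤ 1 - z) _)
  -- slice integrability on the upper region
  have sliceInt : ∀ y ∈ Ioo (0:ℝ) Hc,
      IntegrableOn (fun x => x ^ c * y ^ c * (x - y) ^ β) (Ioo y Hc) := by
    intro y hy
    have hy0 : 0 < y := hy.1
    have hmeas : Measurable fun x : ℝ => x ^ c * y ^ c * (x - y) ^ β :=
      ((measurable_id.pow measurable_const).mul measurable_const).mul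
        ((measurable_id.sub measurable_const).pow measurable_const)
    set M : ℝ := max (y ^ c) (Hc ^ c) * y ^ c with hM
    have hM0 : 0 ≤ M := mul_nonneg
      (le_trans (Real.rpow_nonneg hy0.le c) (le_max_left _ _)) (Real.rpow_nonneg hy0.le c)
    refine Integrable.mono ((integrableOn_rpow_sub hβ1).const_mul M)
      hmeas.aestronglyMeasurable.restrict ?_
    refine (ae_restrict_iff' measurableSet_Ioo).mpr (Filter.Eventually.of_forall fun x hx => ?_)
    have hx0 : 0 < x := lt_trans hy0 hx.1
    have hxy : (0:ℝ) ≤ x - y := by linarith [hx.1]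
    have hxc : x ^ c ≤ max (y ^ c) (Hc ^ c) := by
      rcases le_or_gt 0 c with h | h
      · exact le_trans (Real.rpow_le_rpow hx0.le hx.2.le h) (le_max_right _ _)
      · exact le_trans (Real.rpow_le_rpow_of_nonpos hy0 hx.1.le h.le) (le_max_left _ _)
    rw [Real.norm_of_nonneg (mul_nonneg (mul_nonneg (Real.rpow_nonneg hx0.le c)
        (Real.rpow_nonneg hy0.le c)) (Real.rpow_nonneg hxy β)),
      Real.norm_of_nonneg (mul_nonneg hM0 (Real.rpow_nonneg hxy β))]
    rw [hM]
    calc x ^ c * y ^ c * (x - y) ^ β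
        ≤ (max (y ^ c) (Hc ^ c) * y ^ c) * (x - y) ^ β := by
          apply mul_le_mul_of_nonneg_right _ (Real.rpow_nonneg hxy β)
          exact mul_le_mul_of_nonneg_right hxc (Real.rpow_nonneg hy0.le c)
      _ = _ := rfl
  -- inner integral decomposition
  have innerEq : ∀ y ∈ Ioo (0:ℝ) Hc,
      (∫ x in Ioo (0:ℝ) Hc, x ^ c * y ^ c * |x - y| ^ β) = Bf * y ^ p + g y := by
    intro y hy
    have h0y : (0:ℝ) < y := hy.1
    have hyH : y < Hc := hy.2
    have hsplit : Ioo (0:ℝ) Hc = Ioo 0 y ∪ Ico y Hc := (Set.Ioo_union_Ico_eq_Ioo h0y hyH.le).symm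
    have hdisj : Disjoint (Ioo (0:ℝ) y) (Ico y Hc) := by
      refine Set.disjoint_left.mpr fun x hx hx2 => ?_
      exact absurd hx.2 (not_lt.mpr hx2.1)
    have int1 : IntegrableOn (fun x => x ^ c * y ^ c * |x - y| ^ β) (Ioo 0 y) := by
      have base : IntegrableOn (fun x => y ^ c * (x ^ c * (y - x) ^ β)) (Ioo 0 y) :=
        (integrableOn_beta_kernel hc hβ1 hβ0 h0y).const_mul (y ^ c)
      refine base.congr_fun (fun x hx => ?_) measurableSet_Ioo
      show y ^ c * (x ^ c * (y - x) ^ β) = x ^ c * y ^ c * |x - y| ^ β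
      rw [abs_sub_comm, abs_of_pos (by linarith [hx.2] : (0:ℝ) < y - x)]
      ring
    have int2' : IntegrableOn (fun x => x ^ c * y ^ c * |x - y| ^ β) (Ioo y Hc) := by
      refine ((sliceInt y hy).congr_fun (fun x hx => ?_) measurableSet_Ioo)
      show x ^ c * y ^ c * (x - y) ^ β = x ^ c * y ^ c * |x - y| ^ β
      rw [abs_of_pos (by linarith [hx.1] : (0:ℝ) < x - y)]
    have int2 : IntegrableOn (fun x => x ^ c * y ^ c * |x - y| ^ β) (Ico y Hc) :=
      int2'.congr_set_ae Ioo_ae_eq_Ico.symm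
    rw [hsplit, setIntegral_union hdisj measurableSet_Ico int1 int2]
    congr 1
    · rw [setIntegral_congr_fun measurableSet_Ioo
        (show EqOn (fun x => x ^ c * y ^ c * |x - y| ^ β)
          (fun x => y ^ c * (x ^ c * (y - x) ^ β)) (Ioo 0 y) from fun x hx => by
            show x ^ c * y ^ c * |x - y| ^ β = y ^ c * (x ^ c * (y - x) ^ β)
            rw [abs_sub_comm, abs_of_pos (by linarith [hx.2] : (0:ℝ) < y - x)]; ring)]
      rw [MeasureTheory.integral_const_mul, beta_scaled hc hβ1 hβ0 h0y]
      calc y ^ c * (y ^ (c + β + 1) * Bf) = y ^ c * y ^ (c + β + 1) * Bf := by ring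
        _ = y ^ (c + (c + β + 1)) * Bf := by rw [← Real.rpow_add h0y]
        _ = Bf * y ^ p := by rw [show c + (c + β + 1) = p from by rw [hpdef]; ring]; ring
    · rw [setIntegral_congr_set Ioo_ae_eq_Ico.symm]
      refine setIntegral_congr_fun measurableSet_Ioo fun x hx => ?_
      show x ^ c * y ^ c * |x - y| ^ β = x ^ c * y ^ c * (x - y) ^ β
      rw [abs_of_pos (by linarith [hx.1] : (0:ℝ) < x - y)]
  -- the kernel on the product space
  set F : ℝ → ℝ → ℝ≥0∞ := fun y x =>
    if 0 < y ∧ y < x ∧ x < Hc then ENNReal.ofReal (x ^ c * y ^ c * (x - y) ^ β) else 0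
    with hFdef
  have measF : Measurable (Function.uncurry F) := by
    have : Function.uncurry F = fun q : ℝ × ℝ =>
        if 0 < q.1 ∧ q.1 < q.2 ∧ q.2 < Hc then
          ENNReal.ofReal (q.2 ^ c * q.1 ^ c * (q.2 - q.1) ^ β) else 0 := rfl
    rw [this]
    refine Measurable.ite ?_ ?_ measurable_const
    · exact MeasurableSet.inter (measurableSet_lt measurable_const measurable_fst)
        (MeasurableSet.inter (measurableSet_lt measurable_fst measurable_snd)
          (measurableSet_lt measurable_snd measurable_const))
    · refine ENNReal.measurable_ofReal.comp ?_
      exact ((measurable_snd.pow measurable_const).mul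
        (measurable_fst.pow measurable_const)).mul
        ((measurable_snd.sub measurable_fst).pow measurable_const)
  have hF_outer : ∀ y ∈ Ioo (0:ℝ) Hc, ∫⁻ x, F y x = ENNReal.ofReal (g y) := by
    intro y hy
    have heq : ∀ x, F y x =
        (Ioo y Hc).indicator (fun x => ENNReal.ofReal (x ^ c * y ^ c * (x - y) ^ β)) x := by
      intro x
      by_cases hx : x ∈ Ioo y Hc
      · rw [Set.indicator_of_mem hx]
        simp only [hFdef]
        exact if_pos ⟨hy.1, hx.1, hx.2⟩
      · rw [Set.indicator_of_notMem hx]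
        simp only [hFdef]
        refine if_neg fun h => hx ⟨h.2.1, h.2.2⟩
    rw [lintegral_congr heq, lintegral_indicator measurableSet_Ioo,
      ← ofReal_integral_eq_lintegral_ofReal (sliceInt y hy)]
    refine (ae_restrict_iff' measurableSet_Ioo).mpr (Filter.Eventually.of_forall fun x hx => ?_)
    exact mul_nonneg (mul_nonneg (Real.rpow_nonneg (by linarith [hy.1, hx.1] : (0:ℝ) ≤ x) c)
      (Real.rpow_nonneg hy.1.le c)) (Real.rpow_nonneg (by linarith [hx.1] : (0:ℝ) ≤ x - y) β)
  have hF_outer0 : ∀ y, y ∉ Ioo (0:ℝ) Hc → ∫⁻ x, F y x = 0 := by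
    intro y hy
    have : ∀ x, F y x = 0 := by
      intro x
      simp only [hFdef]
      refine if_neg fun h => hy ⟨h.1, lt_trans h.2.1 h.2.2⟩
    simp [this]
  have hF_swap_inner : ∀ x ∈ Ioo (0:ℝ) Hc, ∫⁻ y, F y x = ENNReal.ofReal (Bf * x ^ p) := by
    intro x hx
    have hx0 : (0:ℝ) < x := hx.1
    have heq : ∀ y, F y x =
        (Ioo (0:ℝ) x).indicator (fun y => ENNReal.ofReal (x ^ c * y ^ c * (x - y) ^ β)) y := by
      intro y
      by_cases hy : y ∈ Ioo (0:ℝ) x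
      · rw [Set.indicator_of_mem hy]
        simp only [hFdef]
        exact if_pos ⟨hy.1, hy.2, hx.2⟩
      · rw [Set.indicator_of_notMem hy]
        simp only [hFdef]
        refine if_neg fun h => hy ⟨h.1, h.2.1⟩
    have hint : IntegrableOn (fun y => x ^ c * y ^ c * (x - y) ^ β) (Ioo 0 x) := by
      have base : IntegrableOn (fun y => x ^ c * (y ^ c * (x - y) ^ β)) (Ioo 0 x) :=
        (integrableOn_beta_kernel hc hβ1 hβ0 hx0).const_mul (x ^ c)
      refine base.congr_fun (fun y hy => ?_) measurableSet_Ioo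
      show x ^ c * (y ^ c * (x - y) ^ β) = x ^ c * y ^ c * (x - y) ^ β
      ring
    have hval : ∫ y in Ioo (0:ℝ) x, x ^ c * y ^ c * (x - y) ^ β = Bf * x ^ p := by
      rw [setIntegral_congr_fun measurableSet_Ioo
        (show EqOn (fun y => x ^ c * y ^ c * (x - y) ^ β)
          (fun y => x ^ c * (y ^ c * (x - y) ^ β)) (Ioo 0 x) from fun y hy => by
            show x ^ c * y ^ c * (x - y) ^ β = x ^ c * (y ^ c * (x - y) ^ β); ring)]
      rw [MeasureTheory.integral_const_mul, beta_scaled hc hβ1 hβ0 hx0]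
      calc x ^ c * (x ^ (c + β + 1) * Bf) = x ^ c * x ^ (c + β + 1) * Bf := by ring
        _ = x ^ (c + (c + β + 1)) * Bf := by rw [← Real.rpow_add hx0]
        _ = Bf * x ^ p := by rw [show c + (c + β + 1) = p from by rw [hpdef]; ring]; ring
    rw [lintegral_congr heq, lintegral_indicator measurableSet_Ioo,
      ← ofReal_integral_eq_lintegral_ofReal hint, hval]
    refine (ae_restrict_iff' measurableSet_Ioo).mpr (Filter.Eventually.of_forall fun y hy => ?_)
    exact mul_nonneg (mul_nonneg (Real.rpow_nonneg hx0.le c)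
      (Real.rpow_nonneg hy.1.le c)) (Real.rpow_nonneg (by linarith [hy.2] : (0:ℝ) ≤ x - y) β)
  have swap : (∫⁻ y, ∫⁻ x, F y x) = ∫⁻ x, ∫⁻ y, F y x :=
    lintegral_lintegral_swap measF.aemeasurable
  have hval : (∫⁻ x, ∫⁻ y, F y x) = ENNReal.ofReal (Bf * (Hc ^ (p+1) / (p+1))) := by
    have heq : ∀ x, (∫⁻ y, F y x)
        = (Ioo (0:ℝ) Hc).indicator (fun x => ENNReal.ofReal (Bf * x ^ p)) x := by
      intro x
      by_cases hx : x ∈ Ioo (0:ℝ) Hc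
      · rw [hF_swap_inner x hx, Set.indicator_of_mem hx]
      · rw [Set.indicator_of_notMem hx]
        have : ∀ y, F y x = 0 := by
          intro y
          simp only [hFdef]
          refine if_neg fun h => hx ⟨lt_trans h.1 h.2.1, h.2.2⟩
        simp [this]
    rw [lintegral_congr heq, lintegral_indicator measurableSet_Ioo,
      ← ofReal_integral_eq_lintegral_ofReal ((integrableOn_rpow_Ioo hp1).const_mul Bf)]
    · rw [MeasureTheory.integral_const_mul, integral_rpow_Ioo hp1 hH]
    · refine (ae_restrict_iff' measurableSet_Ioo).mpr
        (Filter.Eventually.of_forall fun x hx => ?_)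
      exact mul_nonneg hBf_nonneg (Real.rpow_nonneg hx.1.le p)
  have measG : Measurable fun y => ∫⁻ x, F y x := measF.lintegral_prod_right
  have hSne : (∫⁻ y, ∫⁻ x, F y x) ≠ ⊤ := by
    rw [swap, hval]; exact ENNReal.ofReal_ne_top
  have hGlt : ∀ᵐ y, (∫⁻ x, F y x) < ⊤ := ae_lt_top measG hSne
  have hg_nonneg : ∀ y ∈ Ioo (0:ℝ) Hc, 0 ≤ g y := by
    intro y hy
    refine setIntegral_nonneg measurableSet_Ioo fun x hx => ?_
    exact mul_nonneg (mul_nonneg (Real.rpow_nonneg (by linarith [hy.1, hx.1] : (0:ℝ) ≤ x) c)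
      (Real.rpow_nonneg hy.1.le c)) (Real.rpow_nonneg (by linarith [hx.1] : (0:ℝ) ≤ x - y) β)
  have hg_eq : ∀ y ∈ Ioo (0:ℝ) Hc, (∫⁻ x, F y x).toReal = g y := by
    intro y hy
    rw [hF_outer y hy, ENNReal.toReal_ofReal (hg_nonneg y hy)]
  have intGtoReal : Integrable (fun y => (∫⁻ x, F y x).toReal) :=
    integrable_toReal_of_lintegral_ne_top measG.aemeasurable hSne
  have intg : IntegrableOn g (Ioo 0 Hc) := by
    refine (intGtoReal.integrableOn).congr_fun (fun y hy => hg_eq y hy) measurableSet_Ioo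
  have hgint_val : ∫ y in Ioo (0:ℝ) Hc, g y = Bf * (Hc ^ (p+1) / (p+1)) := by
    rw [setIntegral_congr_fun measurableSet_Ioo
      (show EqOn g (fun y => (∫⁻ x, F y x).toReal) (Ioo 0 Hc) from
        fun y hy => (hg_eq y hy).symm)]
    rw [setIntegral_eq_integral_of_forall_compl_eq_zero
      (fun y hy => by rw [hF_outer0 y hy]; simp)]
    rw [integral_toReal measG.aemeasurable hGlt, swap, hval, ENNReal.toReal_ofReal]
    exact mul_nonneg hBf_nonneg (div_nonneg (Real.rpow_nonneg hH.le _) (by linarith))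
  calc ∫ y in Ioo (0:ℝ) Hc, ∫ x in Ioo (0:ℝ) Hc, x ^ c * y ^ c * |x - y| ^ β
      = ∫ y in Ioo (0:ℝ) Hc, (Bf * y ^ p + g y) :=
        setIntegral_congr_fun measurableSet_Ioo fun y hy => innerEq y hy
    _ = (∫ y in Ioo (0:ℝ) Hc, Bf * y ^ p) + ∫ y in Ioo (0:ℝ) Hc, g y :=
        integral_add ((integrableOn_rpow_Ioo hp1).const_mul Bf) intg
    _ = Bf * (Hc ^ (p+1) / (p+1)) + Bf * (Hc ^ (p+1) / (p+1)) := by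
        rw [MeasureTheory.integral_const_mul, integral_rpow_Ioo hp1 hH, hgint_val]
    _ = 2 * Bf * Hc ^ (2*c+β+2) / (2*c+β+2) := by
        rw [show p + 1 = 2*c+β+2 from by rw [hpdef]; ring]
        ring


end FOUAux

theorem second_kind_fOU_variance
    {Ω : Type*} [MeasureSpace Ω] [IsProbabilityMeasure (ℙ : Measure Ω)]
    (H : ℝ) (hH : H ∈ Set.Ioo (1/2 : ℝ) 1) (α : ℝ) (hα : 0 < α)
    (U : Ω → ℝ)
    (hU : ∫ ω, (U ω) ^ 2 ∂ℙ
      = (H ^ ((1-α)*H)) ^ 2 * (H * (2*H-1)) *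
          ∫ y in Set.Ioo (0:ℝ) H, ∫ x in Set.Ioo (0:ℝ) H,
            x ^ ((α-1)*H) * y ^ ((α-1)*H) * |x - y| ^ (2*H-2)) :
    ∫ ω, (U ω) ^ 2 ∂ℙ
      = (2*H-1) * H ^ (2*H) / α * betaFn (1 - H + α*H) (2*H - 1) := by
  obtain ⟨hH1, hH2⟩ := hH
  have hH0 : (0:ℝ) < H := by linarith
  have hαH : 0 < α * H := by positivity
  have key := FOUAux.double_integral_eval (Hc := H) (c := (α-1)*H) (β := 2*H-2) hH0
    (by nlinarith) (by linarith) (by linarith) (by nlinarith)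
  rw [hU, key]
  have hb1 : (α-1)*H + 1 = 1 - H + α*H := by ring
  have hb2 : (2*H-2) + 1 = 2*H - 1 := by ring
  rw [hb1, hb2]
  have he : 2*((α-1)*H) + (2*H-2) + 2 = 2*(α*H) := by ring
  rw [he]
  set Bfv := betaFn (1 - H + α*H) (2*H-1) with hBfv
  have h1 : (H ^ ((1-α)*H))^2 * H ^ (2*(α*H)) = H ^ (2*H) := by
    rw [sq, ← Real.rpow_add hH0, ← Real.rpow_add hH0]
    congr 1
    ring
  have hα' : α ≠ 0 := ne_of_gt hα
  have hH' : H ≠ 0 := ne_of_gt hH0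
  have main : (H ^ ((1-α)*H))^2 * (H*(2*H-1)) * (2 * Bfv * H ^ (2*(α*H)) / (2*(α*H)))
      = ((H ^ ((1-α)*H))^2 * H ^ (2*(α*H))) * ((2*H-1) * Bfv / α) := by
    field_simp
  rw [main, h1]
  ring
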